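/- For all integers n ≥ 2 and k ≥ 2, the median eigenvalues of W_{n,k} are 1 and −1: if λ_1 ≥ λ_2 ≥ … ≥ λ_{2nk} are the eigenvalues of the adjacency matrix of W_{n,k} over ℝ listed in nonincreasing order with multiplicity, then λ_{nk} = 1 and λ_{nk+1} = −1. -/

import Mathlib

open Polynomial

/-- Vertex set of `W n k`: `Sum.inl (i, j)` is the vertex `v_{i,j}` and
`Sum.inr (i, j)` is the vertex `w_{i,j}`, for `i ∈ ℤ/nℤ` and `j ∈ {1, …, k}`. -/
abbrev WVert (n k : ℕ) : Type := (ZMod n × Fin k) ⊕ (ZMod n × Fin k)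

/-- Adjacency of `W n k`: `v_{i,j} ~ w_{i',l}` iff `i' = i`, or `i = i' + 1` and `j = l`. -/
def WAdj (n k : ℕ) : WVert n k → WVert n k → Prop
  | Sum.inl p, Sum.inr q => q.1 = p.1 ∨ (p.1 = q.1 + 1 ∧ p.2 = q.2)
  | Sum.inr q, Sum.inl p => q.1 = p.1 ∨ (p.1 = q.1 + 1 ∧ p.2 = q.2)
  | Sum.inl _, Sum.inl _ => False
  | Sum.inr _, Sum.inr _ => False

/-- The graph `W_{n,k}`: vertices `v_{i,j}` and `w_{i,j}` (`i ∈ ℤ/nℤ`, `1 ≤ j ≤ k`),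
with edges `v_{i,j} w_{i,l}` for all `i, j, l`, and `w_{i,j} v_{i+1,j}` for all `i, j`. -/
def W (n k : ℕ) : SimpleGraph (WVert n k) where
  Adj := WAdj n k
  symm := by
    constructor
    rintro (p | p) (q | q) h
    · exact h.elim
    · exact h
    · exact h
    · exact h.elim
  loopless := by constructor; rintro (p | p) h <;> exact h

instance (n k : ℕ) : DecidableRel (WAdj n k) := fun a b =>
  match a, b with
  | Sum.inl p, Sum.inr q =>
      inferInstanceAs (Decidable (q.1 = p.1 ∨ (p.1 = q.1 + 1 ∧ p.2 = q.2)))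
  | Sum.inr q, Sum.inl p =>
      inferInstanceAs (Decidable (q.1 = p.1 ∨ (p.1 = q.1 + 1 ∧ p.2 = q.2)))
  | Sum.inl _, Sum.inl _ => inferInstanceAs (Decidable False)
  | Sum.inr _, Sum.inr _ => inferInstanceAs (Decidable False)

instance (n k : ℕ) : DecidableRel (W n k).Adj :=
  inferInstanceAs (DecidableRel (WAdj n k))

lemma eval_charpoly'' {N : Type*} [DecidableEq N] [Fintype N] (M : Matrix N N ℝ) (r : ℝ) :
    M.charpoly.eval r = (r • (1 : Matrix N N ℝ) - M).det := by
  rw [Matrix.charpoly, ← Polynomial.coe_evalRingHom, RingHom.map_det]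
  congr 1
  ext i j
  by_cases h : i = j
  · subst h; simp [Matrix.charmatrix_apply, Matrix.one_apply, Matrix.smul_apply]
  · simp [Matrix.charmatrix_apply, Matrix.one_apply, Matrix.smul_apply, h,
      Matrix.diagonal_apply_ne _ h]

lemma WmulVec_inl (n k : ℕ) [NeZero n] (hn : 2 ≤ n) (x : WVert n k → ℝ) (i : ZMod n) (j : Fin k) :
    ((W n k).adjMatrix ℝ).mulVec x (Sum.inl (i, j)) =
      (∑ l, x (Sum.inr (i, l))) + x (Sum.inr (i - 1, j)) := by
  haveI : Fact (1 < n) := ⟨hn⟩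
  rw [Matrix.mulVec, dotProduct, Fintype.sum_sum_type]
  have h1 : ∀ q : ZMod n × Fin k, (W n k).adjMatrix ℝ (Sum.inl (i, j)) (Sum.inl q) * x (Sum.inl q) = 0 := by
    intro q
    simp [SimpleGraph.adjMatrix_apply, W, WAdj]
    left; show (W n k).adjMatrix ℝ _ _ = 0; rw [SimpleGraph.adjMatrix_apply]; exact if_neg (fun h => h)
  rw [Finset.sum_congr rfl (fun q _ => h1 q), Finset.sum_const, smul_zero]
  have h2 : ∀ q : ZMod n × Fin k, (W n k).adjMatrix ℝ (Sum.inl (i, j)) (Sum.inr q) * x (Sum.inr q)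
      = (if q.1 = i then x (Sum.inr q) else 0) + (if q = (i - 1, j) then x (Sum.inr q) else 0) := by
    intro q
    have hadj : (W n k).Adj (Sum.inl (i, j)) (Sum.inr q) ↔ (q.1 = i ∨ (i = q.1 + 1 ∧ j = q.2)) :=
      Iff.rfl
    rw [SimpleGraph.adjMatrix_apply, if_congr hadj rfl rfl]
    by_cases ha : q.1 = i
    · have hb : ¬ (q = (i - 1, j)) := by
        intro hq
        rw [hq] at ha
        exact one_ne_zero (α := ZMod n) (by linear_combination -ha)
      rw [if_pos (Or.inl ha), if_pos ha, if_neg hb, add_zero, one_mul]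
    · by_cases hb : q = (i - 1, j)
      · have : i = q.1 + 1 ∧ j = q.2 := by subst hb; constructor <;> simp [sub_add_cancel]
        rw [if_pos (Or.inr this), if_neg ha, if_pos hb, zero_add, one_mul]
      · have : ¬ (q.1 = i ∨ (i = q.1 + 1 ∧ j = q.2)) := by
          rintro (h | ⟨h1', h2'⟩)
          · exact ha h
          · exact hb (Prod.ext (by rw [h1']; ring) h2'.symm)
        rw [if_neg this, if_neg ha, if_neg hb, zero_mul, add_zero]
  rw [Finset.sum_congr rfl (fun q _ => h2 q), Finset.sum_add_distrib]
  rw [Finset.sum_ite_eq' Finset.univ ((i - 1, j) : ZMod n × Fin k) (fun q => x (Sum.inr q))]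
  simp only [Finset.mem_univ, if_true, zero_add]
  congr 1
  rw [Fintype.sum_prod_type]
  rw [Finset.sum_comm]
  simp [Finset.sum_ite_eq' Finset.univ i]

lemma WmulVec_inr (n k : ℕ) [NeZero n] (hn : 2 ≤ n) (x : WVert n k → ℝ) (i : ZMod n) (j : Fin k) :
    ((W n k).adjMatrix ℝ).mulVec x (Sum.inr (i, j)) =
      (∑ l, x (Sum.inl (i, l))) + x (Sum.inl (i + 1, j)) := by
  haveI : Fact (1 < n) := ⟨hn⟩
  rw [Matrix.mulVec, dotProduct, Fintype.sum_sum_type]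
  have h1 : ∀ q : ZMod n × Fin k, (W n k).adjMatrix ℝ (Sum.inr (i, j)) (Sum.inr q) * x (Sum.inr q) = 0 := by
    intro q
    simp [SimpleGraph.adjMatrix_apply, W, WAdj]
    left; show (W n k).adjMatrix ℝ _ _ = 0; rw [SimpleGraph.adjMatrix_apply]; exact if_neg (fun h => h)
  rw [Finset.sum_congr rfl (fun q _ => h1 q), Finset.sum_const, smul_zero, add_zero]
  have h2 : ∀ p : ZMod n × Fin k, (W n k).adjMatrix ℝ (Sum.inr (i, j)) (Sum.inl p) * x (Sum.inl p)
      = (if p.1 = i then x (Sum.inl p) else 0) + (if p = (i + 1, j) then x (Sum.inl p) else 0) := by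
    intro p
    have hadj : (W n k).Adj (Sum.inr (i, j)) (Sum.inl p) ↔ (i = p.1 ∨ (p.1 = i + 1 ∧ p.2 = j)) :=
      Iff.rfl
    rw [SimpleGraph.adjMatrix_apply, if_congr hadj rfl rfl]
    by_cases ha : p.1 = i
    · have hb : ¬ (p = (i + 1, j)) := by
        intro hq
        rw [hq] at ha
        exact one_ne_zero (α := ZMod n) (by linear_combination ha)
      rw [if_pos (Or.inl ha.symm), if_pos ha, if_neg hb, add_zero, one_mul]
    · by_cases hb : p = (i + 1, j)
      · have : p.1 = i + 1 ∧ p.2 = j := by subst hb; exact ⟨rfl, rfl⟩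
        rw [if_pos (Or.inr this), if_neg ha, if_pos hb, zero_add, one_mul]
      · have : ¬ (i = p.1 ∨ (p.1 = i + 1 ∧ p.2 = j)) := by
          rintro (h | ⟨h1', h2'⟩)
          · exact ha h.symm
          · exact hb (Prod.ext h1' h2')
        rw [if_neg this, if_neg ha, if_neg hb, zero_mul, add_zero]
  rw [Finset.sum_congr rfl (fun p _ => h2 p), Finset.sum_add_distrib]
  rw [Finset.sum_ite_eq' Finset.univ ((i + 1, j) : ZMod n × Fin k) (fun p => x (Sum.inl p))]
  simp only [Finset.mem_univ, if_true]
  congr 1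
  rw [Fintype.sum_prod_type]
  rw [Finset.sum_comm]
  simp [Finset.sum_ite_eq' Finset.univ i]

lemma key_ineq (n k : ℕ) [NeZero n] (hk : 2 ≤ k) (t : ZMod n × Fin k → ℝ) (c : ZMod n) :
    ∑ i : ZMod n, ∑ j : Fin k, (t (i, j))^2 ≤
      ∑ i : ZMod n, ∑ j : Fin k, ((∑ l, t (i, l)) + t (i + c, j))^2 := by
  set T : ZMod n → ℝ := fun i => ∑ l, t (i, l) with hT
  have expand : ∀ i : ZMod n, ∑ j : Fin k, (T i + t (i + c, j))^2
      = (k : ℝ) * (T i)^2 + 2 * T i * T (i + c) + ∑ j, (t (i + c, j))^2 := by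
    intro i
    have h1 : ∀ j : Fin k, (T i + t (i + c, j))^2
        = (T i)^2 + 2 * T i * t (i + c, j) + (t (i + c, j))^2 := fun j => by ring
    rw [Finset.sum_congr rfl (fun j _ => h1 j), Finset.sum_add_distrib, Finset.sum_add_distrib,
      Finset.sum_const, ← Finset.mul_sum]
    simp [mul_comm, nsmul_eq_mul]
    exact Or.inl rfl
  have hshift : ∀ f : ZMod n → ℝ, ∑ i : ZMod n, f (i + c) = ∑ i : ZMod n, f i := by
    intro f
    exact Fintype.sum_equiv (Equiv.addRight c) _ _ (fun i => rfl)
  rw [Finset.sum_congr rfl (fun i _ => expand i), Finset.sum_add_distrib,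
    hshift (fun i => ∑ j, (t (i, j))^2)]
  have h2 : 0 ≤ ∑ i : ZMod n, ((k : ℝ) * (T i)^2 + 2 * T i * T (i + c)) := by
    have h3 : ∑ i : ZMod n, ((k : ℝ) * (T i)^2 + 2 * T i * T (i + c))
        = ((k : ℝ) - 2) * ∑ i : ZMod n, (T i)^2 + ∑ i : ZMod n, (T i + T (i + c))^2 := by
      have h4 : ∑ i : ZMod n, (T (i + c))^2 = ∑ i : ZMod n, (T i)^2 :=
        hshift (fun i => (T i)^2)
      have h5 : ∑ i : ZMod n, (T i + T (i + c))^2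
          = ∑ i : ZMod n, ((T i)^2 + 2 * T i * T (i + c) + (T (i + c))^2) :=
        Finset.sum_congr rfl (fun i _ => by ring)
      rw [h5, Finset.sum_add_distrib, Finset.sum_add_distrib, h4, Finset.sum_add_distrib]
      have hm1 : ∑ i : ZMod n, (k:ℝ) * T i ^ 2 = (k:ℝ) * ∑ i : ZMod n, T i ^ 2 :=
        (Finset.mul_sum _ _ _).symm
      rw [hm1]
      ring
    rw [h3]
    have hk2 : (0:ℝ) ≤ (k : ℝ) - 2 := by
      have : (2:ℝ) ≤ (k:ℝ) := by exact_mod_cast hk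
      linarith
    have s1 : 0 ≤ ∑ i : ZMod n, (T i)^2 := Finset.sum_nonneg (fun i _ => sq_nonneg _)
    have s2 : 0 ≤ ∑ i : ZMod n, (T i + T (i + c))^2 := Finset.sum_nonneg (fun i _ => sq_nonneg _)
    nlinarith
  linarith

lemma W_sum_sq_le (n k : ℕ) [NeZero n] (hn : 2 ≤ n) (hk : 2 ≤ k) (x : WVert n k → ℝ) :
    ∑ p, (x p)^2 ≤ ∑ p, (((W n k).adjMatrix ℝ).mulVec x p)^2 := by
  rw [Fintype.sum_sum_type, Fintype.sum_sum_type]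
  rw [add_comm (∑ a : ZMod n × Fin k, (x (Sum.inl a))^2)]
  have h1 : ∑ a : ZMod n × Fin k, (x (Sum.inr a))^2
      ≤ ∑ a : ZMod n × Fin k, (((W n k).adjMatrix ℝ).mulVec x (Sum.inl a))^2 := by
    rw [Fintype.sum_prod_type, Fintype.sum_prod_type]
    have := key_ineq n k hk (fun q => x (Sum.inr q)) (-1)
    simp only [← sub_eq_add_neg] at this
    refine le_trans this (le_of_eq ?_)
    refine Finset.sum_congr rfl (fun i _ => Finset.sum_congr rfl (fun j _ => ?_))
    rw [WmulVec_inl n k hn x i j]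
  have h2 : ∑ a : ZMod n × Fin k, (x (Sum.inl a))^2
      ≤ ∑ a : ZMod n × Fin k, (((W n k).adjMatrix ℝ).mulVec x (Sum.inr a))^2 := by
    rw [Fintype.sum_prod_type, Fintype.sum_prod_type]
    have := key_ineq n k hk (fun q => x (Sum.inl q)) 1
    refine le_trans this (le_of_eq ?_)
    refine Finset.sum_congr rfl (fun i _ => Finset.sum_congr rfl (fun j _ => ?_))
    rw [WmulVec_inr n k hn x i j]
  exact add_le_add h1 h2

lemma W_root_sq (n k : ℕ) [NeZero n] (hn : 2 ≤ n) (hk : 2 ≤ k) (r : ℝ)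
    (hr : (((W n k).adjMatrix ℝ).charpoly).eval r = 0) : 1 ≤ r^2 := by
  rw [eval_charpoly''] at hr
  obtain ⟨x, hx0, hx⟩ := (Matrix.exists_mulVec_eq_zero_iff).2 hr
  have heig : ((W n k).adjMatrix ℝ).mulVec x = r • x := by
    have : (r • (1 : Matrix (WVert n k) (WVert n k) ℝ)).mulVec x
        - ((W n k).adjMatrix ℝ).mulVec x = 0 := by
      rw [← Matrix.sub_mulVec]; exact hx
    have h1 : (r • (1 : Matrix (WVert n k) (WVert n k) ℝ)).mulVec x = r • x := by
      rw [Matrix.smul_mulVec, Matrix.one_mulVec]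
    rw [h1] at this
    exact (sub_eq_zero.mp this).symm
  have hineq := W_sum_sq_le n k hn hk x
  rw [heig] at hineq
  have hsum : ∑ p, (((r • x) : WVert n k → ℝ) p)^2 = r^2 * ∑ p, (x p)^2 := by
    rw [Finset.mul_sum]
    exact Finset.sum_congr rfl (fun p _ => by simp [Pi.smul_apply, smul_eq_mul]; ring)
  rw [hsum] at hineq
  have hpos : 0 < ∑ p, (x p)^2 := by
    obtain ⟨p, hp⟩ := Function.ne_iff.1 hx0
    refine Finset.sum_pos' (fun q _ => sq_nonneg _) ⟨p, Finset.mem_univ p, ?_⟩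
    have : x p ≠ 0 := hp
    positivity
  nlinarith

lemma W_eval_neg (n k : ℕ) [NeZero n] (r : ℝ) :
    (((W n k).adjMatrix ℝ).charpoly).eval (-r) = (((W n k).adjMatrix ℝ).charpoly).eval r := by
  rw [eval_charpoly'', eval_charpoly'']
  set A : Matrix (WVert n k) (WVert n k) ℝ := (W n k).adjMatrix ℝ with hA
  set d : WVert n k → ℝ := Sum.elim (fun _ => 1) (fun _ => -1) with hd
  set D : Matrix (WVert n k) (WVert n k) ℝ := Matrix.diagonal d with hD
  have hDD : D * D = 1 := by
    rw [hD, Matrix.diagonal_mul_diagonal]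
    have hdd : (fun i => d i * d i) = fun _ => (1:ℝ) := by
      funext p; cases p <;> norm_num [hd]
    rw [hdd, Matrix.diagonal_one]
  have hDAD : D * A * D = -A := by
    ext p q
    rw [Matrix.mul_diagonal, Matrix.diagonal_mul, Matrix.neg_apply]
    rcases p with p | p <;> rcases q with q | q
    · have : A (Sum.inl p) (Sum.inl q) = 0 := by
        rw [hA, SimpleGraph.adjMatrix_apply]; exact if_neg (fun h => h)
      rw [this]; simp
    · simp [hd]
    · simp [hd]
    · have : A (Sum.inr p) (Sum.inr q) = 0 := by
        rw [hA, SimpleGraph.adjMatrix_apply]; exact if_neg (fun h => h)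
      rw [this]; simp
  have key : D * (r • 1 - A) * D = -((-r) • (1 : Matrix (WVert n k) (WVert n k) ℝ) - A) := by
    rw [Matrix.mul_sub, Matrix.sub_mul]
    have h1 : D * (r • (1 : Matrix (WVert n k) (WVert n k) ℝ)) * D = r • 1 := by
      rw [Matrix.mul_smul, mul_one, Matrix.smul_mul, hDD]
    rw [h1, hDAD, neg_smul]
    abel
  have hD2 : D.det * D.det = 1 := by rw [← Matrix.det_mul, hDD, Matrix.det_one]
  have step : (r • (1 : Matrix (WVert n k) (WVert n k) ℝ) - A).det
      = (-((-r) • (1 : Matrix (WVert n k) (WVert n k) ℝ) - A)).det := by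
    calc (r • (1 : Matrix (WVert n k) (WVert n k) ℝ) - A).det
        = D.det * (r • 1 - A).det * D.det := by rw [mul_comm, ← mul_assoc, hD2, one_mul]
      _ = (D * (r • 1 - A) * D).det := by rw [Matrix.det_mul, Matrix.det_mul]
      _ = _ := by rw [key]
  rw [step, Matrix.det_neg]
  have hcard : Even (Fintype.card (WVert n k)) := by
    simp only [Fintype.card_sum]
    exact ⟨_, rfl⟩
  rw [hcard.neg_one_pow, one_mul]

lemma W_eval_pm_one (n k : ℕ) [NeZero n] (hn : 2 ≤ n) (hk : 2 ≤ k) (s : ℝ) (hs : s = 1 ∨ s = -1) :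
    (((W n k).adjMatrix ℝ).charpoly).eval s = 0 := by
  have h0 : (0 : ℕ) < k := by omega
  have h1 : (1 : ℕ) < k := by omega
  set g : Fin k → ℝ := fun j => (if j = ⟨0, h0⟩ then 1 else 0) - (if j = ⟨1, h1⟩ then 1 else 0)
    with hg
  have hgsum : ∑ l, g l = 0 := by
    rw [hg]
    rw [Finset.sum_sub_distrib]
    rw [Finset.sum_ite_eq' Finset.univ (⟨0, h0⟩ : Fin k) (fun _ => (1:ℝ)),
      Finset.sum_ite_eq' Finset.univ (⟨1, h1⟩ : Fin k) (fun _ => (1:ℝ))]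
    simp
  set x : WVert n k → ℝ := Sum.elim (fun p => g p.2) (fun p => s * g p.2) with hx
  have hs2 : s * s = 1 := by rcases hs with h | h <;> rw [h] <;> norm_num
  have heig : ((W n k).adjMatrix ℝ).mulVec x = s • x := by
    funext p
    rcases p with ⟨i, j⟩ | ⟨i, j⟩
    · rw [WmulVec_inl n k hn x i j]
      have : ∑ l, x (Sum.inr (i, l)) = s * ∑ l, g l := by
        rw [Finset.mul_sum]; exact Finset.sum_congr rfl (fun l _ => rfl)
      rw [this, hgsum, mul_zero, zero_add]
      simp [hx]
    · rw [WmulVec_inr n k hn x i j]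
      have : ∑ l, x (Sum.inl (i, l)) = ∑ l, g l := rfl
      rw [this, hgsum, zero_add]
      simp only [hx, Sum.elim_inl, Sum.elim_inr, Pi.smul_apply, smul_eq_mul]
      rw [← mul_assoc, hs2, one_mul]
  have hx0 : x ≠ 0 := by
    intro h
    have : x (Sum.inl ((0 : ZMod n), ⟨0, h0⟩)) = 0 := by rw [h]; rfl
    rw [hx] at this
    simp only [Sum.elim_inl] at this
    rw [hg] at this
    have hne : (⟨0, h0⟩ : Fin k) ≠ ⟨1, h1⟩ := Fin.ne_of_val_ne (by norm_num)
    simp [hne] at this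
  rw [eval_charpoly'']
  rw [← Matrix.exists_mulVec_eq_zero_iff]
  refine ⟨x, hx0, ?_⟩
  rw [Matrix.sub_mulVec, Matrix.smul_mulVec, Matrix.one_mulVec, heig, sub_self]


/-- The median eigenvalues of `W_{n,k}` are `1` and `−1`: if `lam 0 ≥ lam 1 ≥ …` is the
nonincreasing enumeration (with multiplicity) of the `2nk` eigenvalues of the adjacency
matrix of `W_{n,k}`, then the `nk`-th one (i.e. `λ_{nk}`) equals `1` and the `(nk+1)`-st
one (i.e. `λ_{nk+1}`) equals `−1`. -/
theorem W_median_eigenvalues (n k : ℕ) [NeZero n] (hn : 2 ≤ n) (hk : 2 ≤ k)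
    (lam : Fin (2 * n * k) → ℝ) (hmono : Antitone lam)
    (hroots : ((W n k).adjMatrix ℝ).charpoly = ∏ i, (X - C (lam i))) :
    lam ⟨n * k - 1, lt_of_le_of_lt (Nat.sub_le _ _) (by nlinarith)⟩ = 1 ∧ lam ⟨n * k, by nlinarith⟩ = -1 := by
  classical
  have hnk4 : 4 ≤ n * k := by nlinarith
  have hcard2 : n * k < 2 * n * k := by nlinarith
  -- every lam i is a root of the charpoly
  have hroot_i : ∀ i, (((W n k).adjMatrix ℝ).charpoly).eval (lam i) = 0 := by
    intro i
    rw [hroots, eval_prod]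
    refine Finset.prod_eq_zero (Finset.mem_univ i) ?_
    simp
  have hdich : ∀ i, lam i ≤ -1 ∨ 1 ≤ lam i := by
    intro i
    have hsq := W_root_sq n k hn hk _ (hroot_i i)
    rcases le_or_gt (lam i) 0 with h | h
    · left; nlinarith
    · right; nlinarith
  -- spectrum is symmetric about 0
  have hpoly : (∏ i, (X - C (lam i))) = ∏ i, (X - C (-(lam i))) := by
    apply Polynomial.funext
    intro r
    have e1 : ∀ t : ℝ, (((W n k).adjMatrix ℝ).charpoly).eval t = ∏ i, (t - lam i) := by
      intro t
      rw [hroots, eval_prod]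
      exact Finset.prod_congr rfl (fun i _ => by simp)
    have e2 : (∏ i, (X - C (-(lam i)))).eval r = ∏ i, (r + lam i) := by
      rw [eval_prod]
      exact Finset.prod_congr rfl (fun i _ => by simp)
    have h := W_eval_neg n k r
    rw [e1 r, e1 (-r)] at h
    have e3 : ∏ i : Fin (2 * n * k), (-r - lam i)
        = ∏ i : Fin (2 * n * k), ((-1) * (r + lam i)) :=
      Finset.prod_congr rfl (fun i _ => by ring)
    rw [e3, Finset.prod_mul_distrib, Finset.prod_const] at h
    have e4 : ((-1 : ℝ)) ^ (Finset.univ : Finset (Fin (2 * n * k))).card = 1 := by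
      rw [Finset.card_univ, Fintype.card_fin]
      exact Even.neg_one_pow ⟨n * k, by ring⟩
    rw [e4, one_mul] at h
    have e5 : (∏ i, (X - C (lam i)) : ℝ[X]).eval r = ∏ i, (r - lam i) := by
      rw [eval_prod]
      exact Finset.prod_congr rfl (fun i _ => by simp)
    rw [e5, e2, ← h]
  -- multiset of eigenvalues is closed under negation
  have hms : (Finset.univ.val.map lam) = (Finset.univ.val.map lam).map (fun a => -a) := by
    have r1 : (∏ i, (X - C (lam i))).roots = Finset.univ.val.map lam := by
      have hmm : Multiset.map (fun i => X - C (lam i)) Finset.univ.val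
          = Multiset.map (fun a : ℝ => X - C a) (Multiset.map lam Finset.univ.val) := by
        rw [Multiset.map_map]; rfl
      rw [Finset.prod_eq_multiset_prod, hmm]
      exact roots_multiset_prod_X_sub_C _
    have r2 : (∏ i, (X - C (-(lam i)))).roots = (Finset.univ.val.map lam).map (fun a => -a) := by
      have hmm : Multiset.map (fun i => X - C (-(lam i))) Finset.univ.val
          = Multiset.map (fun a : ℝ => X - C a)
              (Multiset.map (fun a => -a) (Multiset.map lam Finset.univ.val)) := by
        rw [Multiset.map_map, Multiset.map_map]; rfl
      rw [Finset.prod_eq_multiset_prod, hmm]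
      exact roots_multiset_prod_X_sub_C _
    rw [hpoly] at r1
    exact r1.symm.trans r2
  -- counting
  set P : Finset (Fin (2 * n * k)) := Finset.univ.filter (fun i => 1 ≤ lam i) with hP
  set Nn : Finset (Fin (2 * n * k)) := Finset.univ.filter (fun i => lam i ≤ -1) with hN
  have cardfilter : ∀ p : ℝ → Prop, ∀ _ : DecidablePred p,
      (Finset.univ.filter (fun i => p (lam i))).card
        = Multiset.countP p (Finset.univ.val.map lam) := by
    intro p hp
    rw [Multiset.countP_map, Finset.card_def, Finset.filter_val]
  have hPN : P.card = Nn.card := by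
    rw [hP, hN, cardfilter (fun a => 1 ≤ a) inferInstance,
      cardfilter (fun a => a ≤ -1) inferInstance]
    conv_lhs => rw [hms]
    rw [Multiset.countP_map, Multiset.countP_eq_card_filter]
    congr 1
    refine Multiset.filter_congr (fun a _ => ?_)
    constructor <;> intro h <;> linarith
  have hPNsum : P.card + Nn.card = 2 * n * k := by
    have hcover : Nn = Finset.univ.filter (fun i => ¬ (1 ≤ lam i)) := by
      rw [hN]
      refine Finset.filter_congr (fun i _ => ?_)
      constructor
      · intro h hc; linarith
      · intro h
        rcases hdich i with h' | h'
        · exact h'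
        · exact absurd h' h
    rw [hcover, hP, Finset.card_filter_add_card_filter_not, Finset.card_univ,
      Fintype.card_fin]
  have hPNsum' : P.card + Nn.card = 2 * (n * k) := by rw [← mul_assoc]; exact hPNsum
  have hPcard : P.card = n * k := by omega
  have hNcard : Nn.card = n * k := by omega
  -- the (n*k)-th largest is ≥ 1
  have ha : 1 ≤ lam ⟨n * k - 1, by omega⟩ := by
    by_contra hcon
    push_neg at hcon
    have hmem : ∀ j, j ∈ P → (j : ℕ) < n * k - 1 := by
      intro j hj
      rw [hP, Finset.mem_filter] at hj
      by_contra hge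
      push_neg at hge
      have hle : (⟨n * k - 1, by omega⟩ : Fin (2 * n * k)) ≤ j := by
        rw [Fin.le_def]; simpa using hge
      have := hmono hle
      linarith [hj.2]
    have hle : P.card ≤ Fintype.card (Fin (n * k - 1)) := by
      rw [← Finset.card_univ]
      refine Finset.card_le_card_of_injOn
        (fun j => (⟨min (j : ℕ) (n * k - 2), by omega⟩ : Fin (n * k - 1)))
        (fun a _ => Finset.mem_univ _) ?_
      intro a ha' b hb' hab
      have h1 := hmem a ha'
      have h2 := hmem b hb'
      have h3 := congrArg Fin.val hab
      simp only [] at h3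
      exact Fin.ext (by omega)
    rw [hPcard, Fintype.card_fin] at hle
    omega
  -- the (n*k+1)-st largest is ≤ -1
  have hb : lam ⟨n * k, by omega⟩ ≤ -1 := by
    by_contra hcon
    push_neg at hcon
    have hmem : ∀ j, j ∈ Nn → n * k + 1 ≤ (j : ℕ) := by
      intro j hj
      rw [hN, Finset.mem_filter] at hj
      by_contra hlt
      push_neg at hlt
      have hle : j ≤ (⟨n * k, by omega⟩ : Fin (2 * n * k)) := by
        rw [Fin.le_def]; simp; omega
      have := hmono hle
      linarith [hj.2]
    have hle : Nn.card ≤ Fintype.card (Fin (n * k - 1)) := by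
      rw [← Finset.card_univ]
      refine Finset.card_le_card_of_injOn
        (fun j => (⟨min ((j : ℕ) - (n * k + 1)) (n * k - 2), by omega⟩ : Fin (n * k - 1)))
        (fun a _ => Finset.mem_univ _) ?_
      intro a ha' b hb' hab
      have h1 := hmem a ha'
      have h2 := hmem b hb'
      have h3 := congrArg Fin.val hab
      simp only [] at h3
      have h4 : (a : ℕ) < 2 * n * k := a.isLt
      have h5 : (b : ℕ) < 2 * n * k := b.isLt
      exact Fin.ext (by omega)
    rw [hNcard, Fintype.card_fin] at hle
    omega
  -- 1 and -1 are eigenvalues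
  have hex1 : ∃ i, lam i = 1 := by
    have h := W_eval_pm_one n k hn hk 1 (Or.inl rfl)
    rw [hroots, eval_prod] at h
    obtain ⟨i, -, hi⟩ := Finset.prod_eq_zero_iff.1 h
    simp only [eval_sub, eval_X, eval_C] at hi
    exact ⟨i, by linarith⟩
  have hex2 : ∃ i, lam i = -1 := by
    have h := W_eval_pm_one n k hn hk (-1) (Or.inr rfl)
    rw [hroots, eval_prod] at h
    obtain ⟨i, -, hi⟩ := Finset.prod_eq_zero_iff.1 h
    simp only [eval_sub, eval_X, eval_C] at hi
    exact ⟨i, by linarith⟩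
  constructor
  · obtain ⟨i, hi⟩ := hex1
    have hi_lt : (i : ℕ) < n * k := by
      by_contra hge
      push_neg at hge
      have hle : (⟨n * k, by omega⟩ : Fin (2 * n * k)) ≤ i := by
        rw [Fin.le_def]; simpa using hge
      have := hmono hle
      rw [hi] at this
      linarith
    have h1le : lam ⟨n * k - 1, by omega⟩ ≤ 1 := by
      have hle : i ≤ (⟨n * k - 1, by omega⟩ : Fin (2 * n * k)) := by
        rw [Fin.le_def]; simp; omega
      have := hmono hle
      rw [hi] at this
      exact this
    exact le_antisymm h1le ha
  · obtain ⟨i, hi⟩ := hex2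
    have hi_ge : n * k ≤ (i : ℕ) := by
      by_contra hlt
      push_neg at hlt
      have hle : i ≤ (⟨n * k - 1, by omega⟩ : Fin (2 * n * k)) := by
        rw [Fin.le_def]; simp; omega
      have := hmono hle
      rw [hi] at this
      linarith
    have hge : -1 ≤ lam ⟨n * k, by omega⟩ := by
      have hle : (⟨n * k, by omega⟩ : Fin (2 * n * k)) ≤ i := by
        rw [Fin.le_def]; simpa using hi_ge
      have := hmono hle
      rw [hi] at this
      exact this
    exact le_antisymm hb hge
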